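/- Let μ be the measure on ℝ with dμ(x) = e^{x²} dx, and let f(x) = x·χ_{(0,∞)}(x). Then the centered maximal function satisfies M^c f(x) < ∞ for every x < 0. Consequently, combined with M^c f = ∞ on [0,∞), the centered maximal operator M^c associated with (ℝ, d_e, e^{x²}dx) does not possess the dichotomy property. -/

import Mathlib

open MeasureTheory Metric Filter Set ENNReal

/-- The centered Hardy–Littlewood maximal function of `f` at `x`,
with respect to the measure `μ`. -/
noncomputable def centeredMaximal {X : Type*} [MeasurableSpace X] [PseudoMetricSpace X]
    (μ : Measure X) (f : X → ℝ) (x : X) : ℝ≥0∞ :=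
  ⨆ (r : ℝ) (_ : 0 < r),
    (∫⁻ y in Metric.ball x r, ENNReal.ofReal |f y| ∂μ) / μ (Metric.ball x r)

/-- The non-centered Hardy–Littlewood maximal function of `f` at `x`:
the supremum is taken over all open balls containing `x`. -/
noncomputable def noncenteredMaximal {X : Type*} [MeasurableSpace X] [PseudoMetricSpace X]
    (μ : Measure X) (f : X → ℝ) (x : X) : ℝ≥0∞ :=
  ⨆ (c : X) (r : ℝ) (_ : 0 < r) (_ : x ∈ Metric.ball c r),
    (∫⁻ y in Metric.ball c r, ENNReal.ofReal |f y| ∂μ) / μ (Metric.ball c r)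

/-- `f ∈ L¹_loc(μ)`: `∫_B |f| dμ < ∞` for every open ball `B`. -/
def LocallyIntegrableBall {X : Type*} [MeasurableSpace X] [PseudoMetricSpace X]
    (μ : Measure X) (f : X → ℝ) : Prop :=
  ∀ (c : X) (r : ℝ), 0 < r → (∫⁻ y in Metric.ball c r, ENNReal.ofReal |f y| ∂μ) < ⊤



private lemma contW : Continuous (fun y : ℝ => Real.exp (y^2)) := by continuity

private lemma intgW (a b : ℝ) : IntegrableOn (fun y : ℝ => Real.exp (y^2)) (Ioo a b) volume :=
  ((contW.continuousOn).integrableOn_Icc).mono_set Set.Ioo_subset_Icc_self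

private lemma hasDerivF (y : ℝ) :
    HasDerivAt (fun y : ℝ => Real.exp (y^2) / 2) (y * Real.exp (y^2)) y := by
  have h1 : HasDerivAt (fun y : ℝ => y^2) (2*y) y := by
    simpa using (hasDerivAt_pow 2 y)
  have h2 := (Real.hasDerivAt_exp (y^2)).comp y h1
  have h3 := h2.div_const 2
  refine h3.congr_deriv ?_
  ring

private lemma integral_mul_exp_sq (a b : ℝ) :
    ∫ y in a..b, y * Real.exp (y^2) = Real.exp (b^2)/2 - Real.exp (a^2)/2 :=
  intervalIntegral.integral_eq_sub_of_hasDerivAt (fun y _ => hasDerivF y)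
    ((continuous_id.mul contW).intervalIntegrable a b)

private lemma integral_exp_mul' (b : ℝ) (hb : b ≠ 0) :
    ∫ y in (0:ℝ)..b, Real.exp (b*y) = (Real.exp (b^2) - 1)/b := by
  have key : ∀ y : ℝ, HasDerivAt (fun y : ℝ => Real.exp (b*y) / b) (Real.exp (b*y)) y := by
    intro y
    have h1 : HasDerivAt (fun y : ℝ => b*y) b y := by
      simpa using (hasDerivAt_id y).const_mul b
    have h2 := (Real.hasDerivAt_exp (b*y)).comp y h1
    have h3 := h2.div_const b
    refine h3.congr_deriv ?_
    field_simp
  rw [intervalIntegral.integral_eq_sub_of_hasDerivAt (fun y _ => key y)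
    (by apply Continuous.intervalIntegrable; continuity)]
  simp only [mul_zero, Real.exp_zero, pow_two]
  ring

private lemma integral_exp_sq_le (b : ℝ) (hb : 0 < b) :
    ∫ y in (0:ℝ)..b, Real.exp (y^2) ≤ Real.exp (b^2)/b := by
  have h1 : ∫ y in (0:ℝ)..b, Real.exp (y^2) ≤ ∫ y in (0:ℝ)..b, Real.exp (b*y) := by
    apply intervalIntegral.integral_mono_on hb.le
      (contW.intervalIntegrable 0 b)
      (by apply Continuous.intervalIntegrable; continuity)
    intro y hy
    exact Real.exp_le_exp.2 (by nlinarith [hy.1, hy.2])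
  rw [integral_exp_mul' b hb.ne'] at h1
  have h2 : (Real.exp (b^2) - 1)/b ≤ Real.exp (b^2)/b := by
    gcongr
    linarith
  linarith

private lemma integral_exp_sq_neg_le (a : ℝ) (ha : a < 0) :
    ∫ y in a..(0:ℝ), Real.exp (y^2) ≤ Real.exp (a^2)/(-a) := by
  have h := integral_exp_sq_le (-a) (by linarith)
  have h2 := intervalIntegral.integral_comp_neg (a := 0) (b := -a) (fun y => Real.exp (y^2))
  simp only [neg_neg, neg_zero, even_two, Even.neg_pow] at h2
  rw [show (∫ y in a..(0:ℝ), Real.exp (y^2)) = ∫ y in (0:ℝ)..(-a), Real.exp (y^2) from h2.symm]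
  simpa [even_two, Even.neg_pow] using h

private lemma meas_Ioo (μ : Measure ℝ)
    (hμ : μ = volume.withDensity (fun x => ENNReal.ofReal (Real.exp (x ^ 2))))
    (a b : ℝ) (hab : a ≤ b) :
    μ (Ioo a b) = ENNReal.ofReal (∫ y in a..b, Real.exp (y^2)) := by
  subst hμ
  rw [withDensity_apply _ measurableSet_Ioo,
    ← ofReal_integral_eq_lintegral_ofReal (intgW a b)
      (Filter.Eventually.of_forall (fun y => (Real.exp_pos _).le)),
    intervalIntegral.integral_of_le hab, integral_Ioc_eq_integral_Ioo]

private lemma abs_f (f : ℝ → ℝ) (hf : f = fun x => if 0 < x then x else 0) (y : ℝ) :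
    |f y| = max y 0 := by
  subst hf
  dsimp only
  rcases lt_or_ge 0 y with h | h
  · rw [if_pos h, abs_of_pos h, max_eq_left h.le]
  · rw [if_neg (not_lt.2 h), abs_zero, max_eq_right h]

private lemma contG : Continuous (fun y : ℝ => max y 0 * Real.exp (y^2)) :=
  (continuous_id.max continuous_const).mul contW

private lemma intgG (a b : ℝ) :
    IntegrableOn (fun y : ℝ => max y 0 * Real.exp (y^2)) (Ioo a b) volume :=
  ((contG.continuousOn).integrableOn_Icc).mono_set Set.Ioo_subset_Icc_self

private lemma num_eq (μ : Measure ℝ)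
    (hμ : μ = volume.withDensity (fun x => ENNReal.ofReal (Real.exp (x ^ 2))))
    (f : ℝ → ℝ) (hf : f = fun x => if 0 < x then x else 0) (a b : ℝ) :
    ∫⁻ y in Ioo a b, ENNReal.ofReal |f y| ∂μ
      = ENNReal.ofReal (∫ y in Ioo a b, max y 0 * Real.exp (y^2)) := by
  have hfm : Measurable fun y => ENNReal.ofReal |f y| := by
    subst hf
    apply Measurable.ennreal_ofReal
    apply Measurable.abs
    exact Measurable.ite (measurableSet_lt measurable_const measurable_id)
      measurable_id measurable_const
  subst hμ
  rw [restrict_withDensity measurableSet_Ioo,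
    lintegral_withDensity_eq_lintegral_mul _
      ((Measurable.ennreal_ofReal (by fun_prop)) :
        Measurable fun x : ℝ => ENNReal.ofReal (Real.exp (x ^ 2))) hfm]
  have hcong : ∀ᵐ y ∂(volume.restrict (Ioo a b)),
      ((fun x : ℝ => ENNReal.ofReal (Real.exp (x ^ 2))) * fun y => ENNReal.ofReal |f y|) y
        = ENNReal.ofReal (max y 0 * Real.exp (y^2)) := by
    apply Filter.Eventually.of_forall
    intro y
    simp only [Pi.mul_apply]
    rw [abs_f f hf, ← ENNReal.ofReal_mul (Real.exp_nonneg _), mul_comm]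
  rw [lintegral_congr_ae hcong,
    ← ofReal_integral_eq_lintegral_ofReal (intgG a b)
      (Filter.Eventually.of_forall (fun y => mul_nonneg (le_max_right _ _) (Real.exp_nonneg _)))]

private lemma realnum_eq (a b : ℝ) (ha : a ≤ 0) (hb : 0 ≤ b) :
    ∫ y in a..b, max y 0 * Real.exp (y^2) = Real.exp (b^2)/2 - 1/2 := by
  have I1 : IntervalIntegrable (fun y => max y 0 * Real.exp (y^2)) volume a 0 :=
    contG.intervalIntegrable _ _
  have I2 : IntervalIntegrable (fun y => max y 0 * Real.exp (y^2)) volume 0 b :=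
    contG.intervalIntegrable _ _
  rw [← intervalIntegral.integral_add_adjacent_intervals I1 I2]
  have e1 : ∫ y in a..(0:ℝ), max y 0 * Real.exp (y^2) = 0 := by
    rw [intervalIntegral.integral_congr (g := fun _ => (0:ℝ))]
    · simp
    · intro y hy
      rw [uIcc_of_le ha] at hy
      simp [max_eq_right hy.2]
  have e2 : ∫ y in (0:ℝ)..b, max y 0 * Real.exp (y^2) = Real.exp (b^2)/2 - 1/2 := by
    rw [intervalIntegral.integral_congr (g := fun y => y * Real.exp (y^2))]
    · rw [integral_mul_exp_sq]
      norm_num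
    · intro y hy
      rw [uIcc_of_le hb] at hy
      simp [max_eq_left hy.1]
  rw [e1, e2]
  ring

private lemma num_eq' (μ : Measure ℝ)
    (hμ : μ = volume.withDensity (fun x => ENNReal.ofReal (Real.exp (x ^ 2))))
    (f : ℝ → ℝ) (hf : f = fun x => if 0 < x then x else 0) (a b : ℝ) (hab : a ≤ b) :
    ∫⁻ y in Ioo a b, ENNReal.ofReal |f y| ∂μ
      = ENNReal.ofReal (∫ y in a..b, max y 0 * Real.exp (y^2)) := by
  rw [num_eq μ hμ f hf a b, intervalIntegral.integral_of_le hab, integral_Ioc_eq_integral_Ioo]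

private lemma part1 (μ : Measure ℝ)
    (hμ : μ = volume.withDensity (fun x => ENNReal.ofReal (Real.exp (x ^ 2))))
    (f : ℝ → ℝ) (hf : f = fun x => if 0 < x then x else 0) :
    ∀ x : ℝ, x < 0 → centeredMaximal μ f x < ⊤ := by
  intro x hx
  have key : centeredMaximal μ f x ≤ ENNReal.ofReal (1/(-2*x)) := by
    rw [centeredMaximal]
    apply iSup₂_le
    intro r hr
    rw [Real.ball_eq_Ioo]
    rcases le_or_gt (x + r) 0 with hb | hb
    · have h0 : (∫⁻ y in Ioo (x-r) (x+r), ENNReal.ofReal |f y| ∂μ) = 0 := by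
        rw [num_eq' μ hμ f hf _ _ (by linarith)]
        have hz : ∫ y in (x-r)..(x+r), max y 0 * Real.exp (y^2) = 0 := by
          rw [intervalIntegral.integral_congr (g := fun _ => (0:ℝ))]
          · simp
          · intro y hy
            rw [uIcc_of_le (by linarith)] at hy
            simp [max_eq_right (le_trans hy.2 hb)]
        rw [hz]
        simp
      rw [h0, ENNReal.zero_div]
      exact zero_le
    · have hab : x - r ≤ x + r := by linarith
      have hnum : (∫⁻ y in Ioo (x-r) (x+r), ENNReal.ofReal |f y| ∂μ)
          ≤ ENNReal.ofReal (Real.exp ((x+r)^2)/2) := by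
        rw [num_eq' μ hμ f hf _ _ hab, realnum_eq _ _ (by linarith) hb.le]
        apply ENNReal.ofReal_le_ofReal
        have := Real.exp_pos ((x+r)^2)
        linarith
      have hden : ENNReal.ofReal (-x) * ENNReal.ofReal (Real.exp ((x+r)^2)) ≤ μ (Ioo (x-r) (x+r)) := by
        have hsub : Ioo (x-r) (-r) ⊆ Ioo (x-r) (x+r) :=
          Ioo_subset_Ioo le_rfl (by linarith)
        have hlow : ∀ y ∈ Ioo (x-r) (-r),
            ENNReal.ofReal (Real.exp ((x+r)^2)) ≤ ENNReal.ofReal (Real.exp (y^2)) := by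
          intro y hy
          apply ENNReal.ofReal_le_ofReal
          apply Real.exp_le_exp.2
          have h1 : y < -r := hy.2
          nlinarith
        calc ENNReal.ofReal (-x) * ENNReal.ofReal (Real.exp ((x+r)^2))
            = ENNReal.ofReal (Real.exp ((x+r)^2)) * volume (Ioo (x-r) (-r)) := by
              rw [Real.volume_Ioo]
              rw [show -r - (x - r) = -x by ring]
              ring
          _ = ∫⁻ y in Ioo (x-r) (-r), ENNReal.ofReal (Real.exp ((x+r)^2)) ∂volume := by
              rw [setLIntegral_const]
          _ ≤ ∫⁻ y in Ioo (x-r) (-r), ENNReal.ofReal (Real.exp (y^2)) ∂volume :=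
              setLIntegral_mono (by fun_prop) hlow
          _ = μ (Ioo (x-r) (-r)) := by
              rw [hμ, withDensity_apply _ measurableSet_Ioo]
          _ ≤ μ (Ioo (x-r) (x+r)) := measure_mono hsub
      calc (∫⁻ y in Ioo (x-r) (x+r), ENNReal.ofReal |f y| ∂μ) / μ (Ioo (x-r) (x+r))
          ≤ ENNReal.ofReal (Real.exp ((x+r)^2)/2)
              / (ENNReal.ofReal (-x) * ENNReal.ofReal (Real.exp ((x+r)^2))) :=
            ENNReal.div_le_div hnum hden
        _ ≤ ENNReal.ofReal (1/(-2*x)) := by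
            apply ENNReal.div_le_of_le_mul
            have hx1 : (0:ℝ) ≤ -x := by linarith
            have hx2 : (0:ℝ) ≤ 1/(-2*x) := by
              apply div_nonneg one_pos.le
              linarith
            rw [← ENNReal.ofReal_mul hx1, ← ENNReal.ofReal_mul hx2]
            apply ENNReal.ofReal_le_ofReal
            have hx0 : x ≠ 0 := hx.ne
            apply le_of_eq
            field_simp
  exact key.trans_lt ENNReal.ofReal_lt_top


private lemma part2 (μ : Measure ℝ)
    (hμ : μ = volume.withDensity (fun x => ENNReal.ofReal (Real.exp (x ^ 2))))
    (f : ℝ → ℝ) (hf : f = fun x => if 0 < x then x else 0) :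
    ∀ x : ℝ, 0 < x → centeredMaximal μ f x = ⊤ := by
  intro x hx
  rw [centeredMaximal, eq_top_iff, ← ENNReal.iSup_natCast]
  apply iSup_le
  intro n
  set c : ℝ := 8*((n:ℝ)+1) with hc
  have hc8 : (8:ℝ) ≤ c := by
    rw [hc]
    nlinarith [Nat.cast_nonneg (α := ℝ) n]
  set r : ℝ := x + c with hrdef
  have hr : 0 < r := by linarith
  have ha : x - r = -c := by rw [hrdef]; ring
  have hbpos : 0 < x + r := by linarith
  have hbc : c ≤ x + r := by linarith
  have hb2 : (2:ℝ) ≤ Real.exp ((x+r)^2) := by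
    have h := Real.add_one_le_exp ((x+r)^2)
    nlinarith
  have hden_le : ∫ y in (x-r)..(x+r), Real.exp (y^2) ≤ Real.exp ((x+r)^2)/(4*((n:ℝ)+1)) := by
    rw [← intervalIntegral.integral_add_adjacent_intervals
      (contW.intervalIntegrable (x-r) 0) (contW.intervalIntegrable 0 (x+r))]
    have h1 := integral_exp_sq_neg_le (x-r) (by linarith : x - r < 0)
    have h2 := integral_exp_sq_le (x+r) hbpos
    have hxr2 : (x-r)^2 ≤ (x+r)^2 := by nlinarith
    have e1 : Real.exp ((x-r)^2)/(-(x-r)) ≤ Real.exp ((x+r)^2)/c := by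
      rw [show -(x-r) = c by rw [hrdef]; ring]
      gcongr
    have e2 : Real.exp ((x+r)^2)/(x+r) ≤ Real.exp ((x+r)^2)/c := by
      gcongr
    have hsum : (∫ y in (x-r)..(0:ℝ), Real.exp (y^2)) + ∫ y in (0:ℝ)..(x+r), Real.exp (y^2)
        ≤ Real.exp ((x+r)^2)/c + Real.exp ((x+r)^2)/c :=
      add_le_add (h1.trans e1) (h2.trans e2)
    have heq : Real.exp ((x+r)^2)/c + Real.exp ((x+r)^2)/c
        = Real.exp ((x+r)^2)/(4*((n:ℝ)+1)) := by
      rw [hc]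
      have hne : (8:ℝ)*((n:ℝ)+1) ≠ 0 := by positivity
      field_simp
      ring
    linarith
  have hden_pos : 0 < ∫ y in (x-r)..(x+r), Real.exp (y^2) := by
    have h1 : ∫ y in (x-r)..(x+r), (1:ℝ) ≤ ∫ y in (x-r)..(x+r), Real.exp (y^2) := by
      apply intervalIntegral.integral_mono_on (by linarith)
        intervalIntegrable_const (contW.intervalIntegrable _ _)
      intro y _
      exact Real.one_le_exp (sq_nonneg y)
    simp only [intervalIntegral.integral_const, smul_eq_mul, mul_one] at h1
    linarith
  have hnum : ∫ y in (x-r)..(x+r), max y 0 * Real.exp (y^2)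
      = Real.exp ((x+r)^2)/2 - 1/2 := realnum_eq _ _ (by linarith) (by linarith)
  have hkey : (n:ℝ) * ∫ y in (x-r)..(x+r), Real.exp (y^2)
      ≤ Real.exp ((x+r)^2)/2 - 1/2 := by
    have hE := Real.exp_pos ((x+r)^2)
    have h3 : (n:ℝ) * (Real.exp ((x+r)^2)/(4*((n:ℝ)+1))) ≤ Real.exp ((x+r)^2)/4 := by
      rw [mul_div_assoc', div_le_div_iff₀ (by positivity) (by norm_num)]
      nlinarith [Nat.cast_nonneg (α := ℝ) n]
    have h5 : (n:ℝ) * ∫ y in (x-r)..(x+r), Real.exp (y^2)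
        ≤ (n:ℝ) * (Real.exp ((x+r)^2)/(4*((n:ℝ)+1))) :=
      mul_le_mul_of_nonneg_left hden_le (Nat.cast_nonneg n)
    nlinarith
  apply le_iSup₂_of_le r hr
  rw [Real.ball_eq_Ioo, num_eq' μ hμ f hf _ _ (by linarith), meas_Ioo μ hμ _ _ (by linarith)]
  rw [ENNReal.le_div_iff_mul_le (Or.inl (ENNReal.ofReal_pos.2 hden_pos).ne')
    (Or.inl ENNReal.ofReal_ne_top)]
  rw [show ((n:ℝ≥0∞)) = ENNReal.ofReal (n:ℝ) from (ENNReal.ofReal_natCast n).symm,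
    ← ENNReal.ofReal_mul (Nat.cast_nonneg n)]
  apply ENNReal.ofReal_le_ofReal
  rw [hnum]
  exact hkey

/-- For `dμ = e^{x²} dx` on `ℝ` and `f(x) = x·χ_{(0,∞)}(x)`, the centered
maximal function `M^c f` is finite at every `x < 0`; consequently the centered maximal
operator associated with `(ℝ, d_e, e^{x²}dx)` does not possess the dichotomy property. -/

theorem centeredMaximal_lt_top_of_neg_and_no_dichotomy (μ : Measure ℝ)
    (hμ : μ = volume.withDensity (fun x => ENNReal.ofReal (Real.exp (x ^ 2))))
    (f : ℝ → ℝ) (hf : f = fun x => if 0 < x then x else 0) :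
    (∀ x : ℝ, x < 0 → centeredMaximal μ f x < ⊤) ∧
    ¬ (∀ g : ℝ → ℝ, LocallyIntegrableBall μ g →
        μ {x | centeredMaximal μ g x = ⊤} = 0 ∨
          {x | centeredMaximal μ g x = ⊤} = Set.univ) := by
  constructor
  · exact part1 μ hμ f hf
  · intro h
    have hloc : LocallyIntegrableBall μ f := by
      intro c r hr
      rw [Real.ball_eq_Ioo, num_eq' μ hμ f hf _ _ (by linarith)]
      exact ENNReal.ofReal_lt_top
    rcases h f hloc with h0 | huniv
    · have hsub : Ioo (0:ℝ) 1 ⊆ {x | centeredMaximal μ f x = ⊤} :=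
        fun y hy => part2 μ hμ f hf y hy.1
      have hz : μ (Ioo (0:ℝ) 1) = 0 := measure_mono_null hsub h0
      rw [meas_Ioo μ hμ 0 1 (by norm_num), ENNReal.ofReal_eq_zero] at hz
      have hge : (1:ℝ) ≤ ∫ y in (0:ℝ)..1, Real.exp (y^2) := by
        have h1 : ∫ y in (0:ℝ)..1, (1:ℝ) ≤ ∫ y in (0:ℝ)..1, Real.exp (y^2) := by
          apply intervalIntegral.integral_mono_on (by norm_num)
            intervalIntegrable_const (contW.intervalIntegrable _ _)
          intro y _
          exact Real.one_le_exp (sq_nonneg y)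
        simpa using h1
      linarith
    · have h1 := part1 μ hμ f hf (-1) (by norm_num)
      have h2 : centeredMaximal μ f (-1) = ⊤ := by
        have hm : (-1:ℝ) ∈ {x | centeredMaximal μ f x = ⊤} := huniv ▸ mem_univ _
        exact hm
      rw [h2] at h1
      exact absurd h1 (lt_irrefl _)
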